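/- For any tree t over {a,b}, the unique run of the deterministic parity automaton A_L (states l₁ of rank 1, l₀ of rank 0, ⊤₀ all-accepting of rank 0; transitions: on a from l-states go to (l₁, l₀), on b go to (⊤₀, ⊤₀); initial state l₁) has a branch on which rank 1 occurs infinitely often if and only if t has an all-a branch turning left infinitely often; hence A_L recognizes exactly the complement L of G. -/
import Mathlib


/-- Infinite binary trees over {a,b}; `true` = a, `false` = b. -/
abbrev Tree2 := List (Fin 2) → Bool

/-- The length-`n` prefix of a branch. -/
def pre (β : ℕ → Fin 2) (n : ℕ) : List (Fin 2) := List.ofFn (fun i : Fin n => β i)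

/-- A branch is good: all its finite prefixes are labelled `a` and it turns left (0)
infinitely often. -/
def Good (t : Tree2) (β : ℕ → Fin 2) : Prop :=
  (∀ n, t (pre β n) = true) ∧ (∀ m, ∃ n ≥ m, β n = 0)

/-- `β` is strictly to the left of `γ`. -/
def LeftOf (β γ : ℕ → Fin 2) : Prop :=
  ∃ n, (∀ i < n, β i = γ i) ∧ β n = 0 ∧ γ n = 1

/-- A branch passes through a node. -/
def Through (γ : ℕ → Fin 2) (v : List (Fin 2)) : Prop := pre γ v.length = v

/-- The set of trees that have a good branch. -/
def G : Set Tree2 := {t | ∃ β, Good t β}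

/-- `r` occurs infinitely often in the sequence `g`. -/
def InfOften (g : ℕ → ℕ) (r : ℕ) : Prop := ∀ m, ∃ n ≥ m, g n = r

/-- Parity condition: the maximal value occurring infinitely often is even. -/
def ParityOk (g : ℕ → ℕ) : Prop :=
  ∃ r, Even r ∧ InfOften g r ∧ ∀ r', InfOften g r' → r' ≤ r

/-- States of the deterministic automaton `A_L`. -/
inductive QL | l1 | l0 | top0
deriving DecidableEq

def rankL : QL → ℕ
  | .l1 => 1
  | .l0 => 0
  | .top0 => 0

/-- Transition function of `A_L`: on `a` the l-states go to `(l₁, l₀)`, on `b`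
to `(⊤₀, ⊤₀)`; `⊤₀` is all-accepting. -/
def deltaL : QL → Bool → QL × QL
  | .top0, _ => (.top0, .top0)
  | _, true => (.l1, .l0)
  | _, false => (.top0, .top0)

def childL (d : Fin 2) (p : QL × QL) : QL := if d = 0 then p.1 else p.2

def subt (t : Tree2) (d : Fin 2) : Tree2 := fun w => t (d :: w)

/-- The state of the unique run of `A_L` started in `q` at a node of `t`. -/
def runL (q : QL) (t : Tree2) : List (Fin 2) → QL
  | [] => q
  | d :: v => runL (childL d (deltaL q (t []))) (subt t d) v

lemma pre_succ (β : ℕ → Fin 2) (n : ℕ) :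
    pre β (n+1) = β 0 :: pre (fun i => β (i+1)) n := by
  simp [pre, List.ofFn_succ]

lemma runL_top (t : Tree2) (v : List (Fin 2)) : runL QL.top0 t v = QL.top0 := by
  induction v generalizing t with
  | nil => rfl
  | cons d v ih =>
    show runL (childL d (deltaL QL.top0 (t []))) (subt t d) v = QL.top0
    simp only [deltaL, childL]
    split <;> exact ih _

lemma rankL_le (q : QL) : rankL q ≤ 1 := by cases q <;> simp [rankL]

lemma rank_run (n : ℕ) (q : QL) (hq : q ≠ QL.top0) (t : Tree2) (β : ℕ → Fin 2) :
    rankL (runL q t (pre β n)) = 1 ↔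
      (∀ k < n, t (pre β k) = true) ∧ (if n = 0 then q = QL.l1 else β (n-1) = 0) := by
  induction n generalizing q t β with
  | zero =>
    show rankL (runL q t (pre β 0)) = 1 ↔ _
    have : pre β 0 = [] := rfl
    rw [this]
    cases q <;> simp [runL, rankL]
  | succ n ih =>
    rw [pre_succ]
    show rankL (runL (childL (β 0) (deltaL q (t []))) (subt t (β 0)) (pre (fun i => β (i+1)) n)) = 1 ↔ _
    rcases ht : t [] with _ | _
    · -- t [] = false
      have hd : deltaL q false = (QL.top0, QL.top0) := by
        cases q <;> simp [deltaL] at hq ⊢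
      rw [hd]
      have hc : childL (β 0) (QL.top0, QL.top0) = QL.top0 := by
        unfold childL; split <;> rfl
      rw [hc, runL_top]
      simp only [rankL]
      constructor
      · omega
      · rintro ⟨h1, -⟩
        have := h1 0 (by omega)
        have hp : pre β 0 = [] := rfl
        rw [hp, ht] at this
        exact absurd this (by simp)
    · -- t [] = true
      have hd : deltaL q true = (QL.l1, QL.l0) := by
        cases q <;> simp [deltaL] at hq ⊢
      rw [hd]
      set q' := childL (β 0) (QL.l1, QL.l0) with hq'
      have hq'def : q' = if β 0 = 0 then QL.l1 else QL.l0 := rfl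
      have hq'ne : q' ≠ QL.top0 := by
        rw [hq'def]; split <;> simp
      rw [ih q' hq'ne]
      have hsub : ∀ k, subt t (β 0) (pre (fun i => β (i+1)) k) = t (pre β (k+1)) := by
        intro k; rw [pre_succ]; rfl
      constructor
      · rintro ⟨h1, h2⟩
        refine ⟨?_, ?_⟩
        · intro k hk
          rcases Nat.eq_zero_or_pos k with rfl | hk0
          · show t (pre β 0) = true
            have hp : pre β 0 = [] := rfl
            rw [hp, ht]
          · have := h1 (k-1) (by omega)
            rw [hsub] at this
            have : t (pre β (k-1+1)) = true := this
            rwa [Nat.sub_add_cancel hk0] at this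
        · simp only [Nat.succ_ne_zero, if_false, Nat.add_sub_cancel]
          rcases Nat.eq_zero_or_pos n with rfl | hn0
          · simp only [if_pos rfl] at h2
            rw [hq'def] at h2
            by_contra hb
            rw [if_neg hb] at h2
            exact absurd h2 (by simp)
          · rw [if_neg (by omega)] at h2
            have : n - 1 + 1 = n := by omega
            rwa [this] at h2
      · rintro ⟨h1, h2⟩
        simp only [Nat.succ_ne_zero, if_false, Nat.add_sub_cancel] at h2
        refine ⟨?_, ?_⟩
        · intro k hk
          rw [hsub]
          exact h1 (k+1) (by omega)
        · rcases Nat.eq_zero_or_pos n with rfl | hn0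
          · rw [if_pos rfl, hq'def, if_pos h2]
          · rw [if_neg (by omega)]
            show β (n-1+1) = 0
            rwa [Nat.sub_add_cancel hn0]
/-- The unique run of `A_L` (initial state `l₁`) has a branch on which rank 1 occurs
infinitely often iff `t` has a good branch; hence `A_L` recognizes the complement of `G`. -/
theorem AL_recognizes_L (t : Tree2) :
    ((∃ β : ℕ → Fin 2, InfOften (fun n => rankL (runL QL.l1 t (pre β n))) 1)
        ↔ ∃ β, Good t β) ∧
    ((∀ β : ℕ → Fin 2, ParityOk (fun n => rankL (runL QL.l1 t (pre β n)))) ↔ t ∈ Gᶜ) := by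
  have hl1 : (QL.l1 : QL) ≠ QL.top0 := by simp
  have key : ∀ β, InfOften (fun n => rankL (runL QL.l1 t (pre β n))) 1 ↔ Good t β := by
    intro β
    constructor
    · intro h
      constructor
      · intro n
        obtain ⟨m, hm, h1⟩ := h (n+1)
        rw [rank_run m QL.l1 hl1 t β] at h1
        exact h1.1 n (by omega)
      · intro m
        obtain ⟨n, hn, h1⟩ := h (m+1)
        rw [rank_run n QL.l1 hl1 t β] at h1
        have h2 := h1.2
        rw [if_neg (by omega)] at h2
        exact ⟨n-1, by omega, h2⟩
    · rintro ⟨h1, h2⟩ m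
      obtain ⟨n, hn, hβ⟩ := h2 m
      refine ⟨n+1, by omega, ?_⟩
      rw [rank_run (n+1) QL.l1 hl1 t β]
      refine ⟨fun k _ => h1 k, ?_⟩
      rw [if_neg (by omega)]
      simpa using hβ
  have parity_iff : ∀ β, ParityOk (fun n => rankL (runL QL.l1 t (pre β n))) ↔
      ¬ InfOften (fun n => rankL (runL QL.l1 t (pre β n))) 1 := by
    intro β
    set g : ℕ → ℕ := fun n => rankL (runL QL.l1 t (pre β n)) with hg
    have hgle : ∀ n, g n ≤ 1 := fun n => rankL_le _
    constructor
    · rintro ⟨r, hre, hr, hmax⟩ hinf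
      have h1r : 1 ≤ r := hmax 1 hinf
      have : r ≠ 1 := by rintro rfl; have := Nat.even_iff.mp hre; omega
      have hr2 : 2 ≤ r := by omega
      obtain ⟨n, -, hn⟩ := hr 0
      have := hgle n
      omega
    · intro h
      unfold InfOften at h
      push_neg at h
      obtain ⟨m, hm⟩ := h
      refine ⟨0, Even.zero, ?_, ?_⟩
      · intro m'
        refine ⟨max m m', le_max_right _ _, ?_⟩
        have h1 := hm (max m m') (le_max_left _ _)
        have h2 := hgle (max m m')
        omega
      · intro r' hr'
        obtain ⟨n, hn, he⟩ := hr' m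
        have h1 := hm n hn
        have h2 := hgle n
        omega
  refine ⟨exists_congr key, ?_⟩
  rw [forall_congr' parity_iff]
  constructor
  · intro h
    simp only [Set.mem_compl_iff, G, Set.mem_setOf_eq]
    rintro ⟨β, hβ⟩
    exact h β ((key β).mpr hβ)
  · intro h β hinf
    simp only [Set.mem_compl_iff, G, Set.mem_setOf_eq] at h
    exact h ⟨β, (key β).mp hinf⟩
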